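/- Let d be a positive integer and L ≥ μ > 0 real numbers, and let f : ℝ^d → ℝ be differentiable with L-Lipschitz gradient and satisfying the μ-Polyak-Łojasiewicz condition with respect to a value f*. Let a, b be real numbers with 2a > 3 and b > max( max(a²L/μ − 3, 0)/(2a − 3) + 1/√(2a − 3), 1 ). Let x^{(0)} ∈ ℝ^d and define the gradient descent iterates x^{(t+1)} = x^{(t)} − η_t ∇f(x^{(t)}) with η_t = a/(μ(t + b)). Then for every positive integer T, f(x^{(T)}) − f* ≤ ((b − 1)³/T³)·(f(x^{(0)}) − f*). -/

import Mathlib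

set_option maxHeartbeats 1000000

lemma descent_lemma_aux {d : ℕ} {L : ℝ} (hL : 0 ≤ L) {f : EuclideanSpace ℝ (Fin d) → ℝ}
    (hdiff : Differentiable ℝ f)
    (hlip : ∀ x y : EuclideanSpace ℝ (Fin d),
      ‖gradient f x - gradient f y‖ ≤ L * ‖x - y‖)
    (x v : EuclideanSpace ℝ (Fin d)) :
    f (x + v) ≤ f x + inner ℝ (gradient f x) v + L / 2 * ‖v‖ ^ 2 := by
  have hgradcont : Continuous (gradient f) := by
    have : LipschitzWith L.toNNReal (gradient f) :=
      LipschitzWith.of_dist_le_mul (fun p q => by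
        rw [dist_eq_norm, dist_eq_norm, Real.coe_toNNReal L hL]; exact hlip p q)
    exact this.continuous
  have hderiv : ∀ t : ℝ, HasDerivAt (fun t : ℝ => f (x + t • v))
      (inner ℝ (gradient f (x + t • v)) v) t := by
    intro t
    have line : HasDerivAt (fun t : ℝ => x + t • v) v t := by
      simpa using ((hasDerivAt_id t).smul_const v).const_add x
    simpa [Function.comp_def] using ((hdiff (x + t • v)).hasGradientAt.hasFDerivAt).comp_hasDerivAt t line
  set G : ℝ → ℝ := fun t => inner ℝ (gradient f (x + t • v)) v with hG
  have hGcont : Continuous G := by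
    apply Continuous.inner
    · exact hgradcont.comp (by continuity)
    · exact continuous_const
  have hHcont : Continuous (fun t : ℝ => (inner ℝ (gradient f x) v : ℝ) + L * ‖v‖ ^ 2 * t) := by
    continuity
  have hFTC : f (x + v) - f x = ∫ t in (0:ℝ)..1, G t := by
    have := intervalIntegral.integral_eq_sub_of_hasDerivAt
      (f := fun t : ℝ => f (x + t • v)) (f' := G)
      (fun t _ => hderiv t) (hGcont.intervalIntegrable 0 1)
    simp at this
    linarith [this]
  have hbound : ∫ t in (0:ℝ)..1, G t ≤ ∫ t in (0:ℝ)..1,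
      ((inner ℝ (gradient f x) v : ℝ) + L * ‖v‖ ^ 2 * t) := by
    apply intervalIntegral.integral_mono_on (by norm_num) (hGcont.intervalIntegrable 0 1)
      (hHcont.intervalIntegrable 0 1)
    intro t ht
    have h1 : G t - inner ℝ (gradient f x) v
        = inner ℝ (gradient f (x + t • v) - gradient f x) v := by
      rw [inner_sub_left]
    have h2 : (inner ℝ (gradient f (x + t • v) - gradient f x) v : ℝ) ≤ L * ‖v‖ ^ 2 * t := by
      calc (inner ℝ (gradient f (x + t • v) - gradient f x) v : ℝ)
          ≤ ‖gradient f (x + t • v) - gradient f x‖ * ‖v‖ := real_inner_le_norm _ _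
        _ ≤ (L * ‖x + t • v - x‖) * ‖v‖ := by gcongr; exact hlip _ _
        _ = L * ‖v‖ ^ 2 * t := by
            have h3 : x + t • v - x = t • v := by abel
            rw [h3, norm_smul, Real.norm_eq_abs, abs_of_nonneg ht.1]
            ring
    linarith [h1 ▸ h2]
  have hval : (∫ t in (0:ℝ)..1, ((inner ℝ (gradient f x) v : ℝ) + L * ‖v‖ ^ 2 * t))
      = inner ℝ (gradient f x) v + L / 2 * ‖v‖ ^ 2 := by
    rw [intervalIntegral.integral_add intervalIntegrable_const
      ((by continuity : Continuous (fun t : ℝ => L * ‖v‖ ^ 2 * t)).intervalIntegrable 0 1)]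
    rw [intervalIntegral.integral_const_mul, integral_id]
    simp
    ring
  linarith [hFTC, hbound, hval ▸ hbound]


lemma fac_ineq_aux (a b L μ s : ℝ) (hμ : 0 < μ) (ha : 3 < 2*a) (hb1 : 1 < b)
    (hbs : b ≤ s)
    (master : a ^ 2 * L / μ ≤ (2*a-3) * b + 3 - 1 / b) :
    1 - 2*μ*(a/(μ*s)) + μ*L*(a/(μ*s))^2 ≤ ((s-1)/s)^3 := by
  have hb0 : (0:ℝ) < b := by linarith
  have hs0 : (0:ℝ) < s := by linarith
  have e1 : 1 - 2*μ*(a/(μ*s)) + μ*L*(a/(μ*s))^2 = 1 - 2*(a/s) + (a^2*L/μ)*(1/s^2) := by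
    field_simp
  rw [e1, div_pow, le_div_iff₀ (by positivity : (0:ℝ) < s^3)]
  have hms : (a^2*L/μ) * s ≤ ((2*a-3)*b + 3 - 1/b) * s :=
    mul_le_mul_of_nonneg_right master hs0.le
  have h1b : 1 ≤ (1/b) * s := by
    have := mul_le_mul_of_nonneg_left hbs (by positivity : (0:ℝ) ≤ 1/b)
    rwa [one_div_mul_cancel hb0.ne'] at this
  have hks : (2*a-3)*b*s ≤ (2*a-3)*s*s := by
    nlinarith [mul_nonneg (mul_nonneg (by linarith : (0:ℝ) ≤ 2*a-3) hs0.le) (sub_nonneg.2 hbs)]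
  have keyp : (a^2*L/μ) * s ≤ (2*a-3)*s^2 + 3*s - 1 := by nlinarith
  have e2 : (1 - 2*(a/s) + (a^2*L/μ)*(1/s^2)) * s^3 = s^3 - 2*a*s^2 + (a^2*L/μ)*s := by
    field_simp
  rw [e2]
  nlinarith [keyp]

/-- Full-batch gradient descent with learning rate
`η_t = a/(μ(t+b))` on an `L`-smooth `μ`-PL function achieves the `O(1/T³)` rate
`f(x^{(T)}) − f* ≤ ((b−1)³/T³)(f(x^{(0)}) − f*)`. -/
theorem gd_pl_cubic_rate
    (d : ℕ) (hd : 0 < d) (L μ : ℝ) (hμ : 0 < μ) (hLμ : μ ≤ L)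
    (f : EuclideanSpace ℝ (Fin d) → ℝ) (fstar : ℝ)
    (hdiff : Differentiable ℝ f)
    (hlip : ∀ x y : EuclideanSpace ℝ (Fin d),
      ‖gradient f x - gradient f y‖ ≤ L * ‖x - y‖)
    (hlb : ∀ x : EuclideanSpace ℝ (Fin d), fstar ≤ f x)
    (hPL : ∀ x : EuclideanSpace ℝ (Fin d),
      μ * (f x - fstar) ≤ (1 / 2) * ‖gradient f x‖ ^ 2)
    (a b : ℝ) (ha : 3 < 2 * a)
    (hb : max (max (a ^ 2 * L / μ - 3) 0 / (2 * a - 3) + 1 / Real.sqrt (2 * a - 3)) 1 < b)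
    (η : ℕ → ℝ) (hη : ∀ t : ℕ, η t = a / (μ * ((t : ℝ) + b)))
    (x : ℕ → EuclideanSpace ℝ (Fin d))
    (hiter : ∀ t : ℕ, x (t + 1) = x t - η t • gradient f (x t)) :
    ∀ T : ℕ, 0 < T →
      f (x T) - fstar ≤ ((b - 1) ^ 3 / (T : ℝ) ^ 3) * (f (x 0) - fstar) := by
  have hL0 : (0:ℝ) < L := lt_of_lt_of_le hμ hLμ
  have ha0 : (0:ℝ) < a := by linarith
  have hk : 0 < 2 * a - 3 := by linarith
  have hb1 : (1:ℝ) < b := lt_of_le_of_lt (le_max_right _ _) hb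
  have hb0 : (0:ℝ) < b := by linarith
  -- master arithmetic inequalities
  have hbB : max (a ^ 2 * L / μ - 3) 0 / (2 * a - 3) + 1 / Real.sqrt (2 * a - 3) < b :=
    lt_of_le_of_lt (le_max_left _ _) hb
  have hsk : 0 < Real.sqrt (2*a-3) := Real.sqrt_pos.2 hk
  have hM : (0:ℝ) ≤ max (a ^ 2 * L / μ - 3) 0 := le_max_right _ _
  have hMk : 0 ≤ max (a ^ 2 * L / μ - 3) 0 / (2*a-3) := div_nonneg hM hk.le
  have hbk : 1 / Real.sqrt (2*a-3) < b := by linarith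
  have hinvb : 1 / b < Real.sqrt (2*a-3) := by
    rw [div_lt_iff₀ hb0]
    have h := (div_lt_iff₀ hsk).mp hbk
    nlinarith
  have h1 : max (a ^ 2 * L / μ - 3) 0 + Real.sqrt (2*a-3) < (2*a-3) * b := by
    have he : (2*a-3) * (max (a ^ 2 * L / μ - 3) 0 / (2*a-3) + 1 / Real.sqrt (2*a-3))
        = max (a ^ 2 * L / μ - 3) 0 + Real.sqrt (2*a-3) := by
      rw [mul_add, mul_div_cancel₀ _ hk.ne', mul_one_div, Real.div_sqrt]
    nlinarith [mul_lt_mul_of_pos_left hbB hk]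
  have hmax : a ^ 2 * L / μ - 3 ≤ max (a ^ 2 * L / μ - 3) 0 := le_max_left _ _
  have master : a ^ 2 * L / μ ≤ (2*a-3) * b + 3 - 1 / b := by linarith
  have hinvb0 : 0 < 1 / b := by positivity
  have haL : a * L < 2 * b * μ := by
    have h3 : a ^ 2 * L / μ < 2 * a * b := by nlinarith
    have h2 : a ^ 2 * L < 2 * a * b * μ := by
      calc a ^ 2 * L = (a ^ 2 * L / μ) * μ := by field_simp
        _ < 2 * a * b * μ := by nlinarith
    nlinarith [hk]
  -- per-step contraction
  have key : ∀ t : ℕ, f (x (t+1)) - fstar ≤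
      ((((t:ℝ) + b - 1) / ((t:ℝ) + b)) ^ 3) * (f (x t) - fstar) := by
    intro t
    have ht0 : (0:ℝ) ≤ t := Nat.cast_nonneg t
    set s : ℝ := (t:ℝ) + b with hs
    have hbs : b ≤ s := by rw [hs]; linarith
    have hs1 : 1 < s := by linarith
    have hs0 : 0 < s := by linarith
    have hηval : η t = a / (μ * s) := hη t
    have hη0 : 0 < η t := by rw [hηval]; positivity
    have hLη : L * η t ≤ 2 := by
      rw [hηval, mul_div_assoc']
      rw [div_le_iff₀ (by positivity : (0:ℝ) < μ * s)]
      nlinarith [haL, hbs, hμ, hL0]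
    -- descent step
    set g := gradient f (x t) with hg
    have hxt : x t + (-(η t)) • g = x (t+1) := by
      rw [hiter t, neg_smul, sub_eq_add_neg]
    have hstep := descent_lemma_aux hL0.le hdiff hlip (x t) ((-(η t)) • g)
    rw [hxt] at hstep
    have hin : (inner ℝ g ((-(η t)) • g) : ℝ) = -(η t) * ‖g‖ ^ 2 := by
      rw [real_inner_smul_right, real_inner_self_eq_norm_sq]
    have hns : ‖(-(η t)) • g‖ ^ 2 = (η t) ^ 2 * ‖g‖ ^ 2 := by
      rw [norm_smul, mul_pow, Real.norm_eq_abs, abs_neg, abs_of_pos hη0]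
    rw [hin, hns] at hstep
    have hE : 0 ≤ f (x t) - fstar := sub_nonneg.2 (hlb _)
    have hN : 0 ≤ ‖g‖ ^ 2 := sq_nonneg _
    have hcoef : 0 ≤ η t * (1 - L * η t / 2) := by nlinarith
    have hPLt : 2 * μ * (f (x t) - fstar) ≤ ‖g‖ ^ 2 := by
      have := hPL (x t); rw [← hg] at this; linarith
    have hB : f (x (t+1)) - fstar ≤ (1 - 2*μ*(η t) + μ*L*(η t)^2) * (f (x t) - fstar) := by
      nlinarith [mul_le_mul_of_nonneg_left hPLt hcoef]
    have hfac : 1 - 2*μ*(η t) + μ*L*(η t)^2 ≤ ((s-1)/s)^3 := by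
      rw [hηval]
      exact fac_ineq_aux a b L μ s hμ ha hb1 hbs master
    calc f (x (t+1)) - fstar ≤ (1 - 2*μ*(η t) + μ*L*(η t)^2) * (f (x t) - fstar) := hB
      _ ≤ ((s-1)/s)^3 * (f (x t) - fstar) := mul_le_mul_of_nonneg_right hfac hE
  -- induction
  have hE0 : 0 ≤ f (x 0) - fstar := sub_nonneg.2 (hlb _)
  have main : ∀ T : ℕ, f (x T) - fstar ≤
      ((b-1)/((T:ℝ)+b-1))^3 * (f (x 0) - fstar) := by
    intro T
    induction T with
    | zero =>
      simp
      rw [div_self (by linarith : b - 1 ≠ 0)]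
      norm_num
    | succ t ih =>
      have ht0 : (0:ℝ) ≤ t := Nat.cast_nonneg t
      have hden : (0:ℝ) < (t:ℝ) + b - 1 := by linarith
      have hden2 : (0:ℝ) < (t:ℝ) + b := by linarith
      have hrat_nn : 0 ≤ (((t:ℝ) + b - 1) / ((t:ℝ) + b)) ^ 3 := by positivity
      have hmul : (((t:ℝ) + b - 1) / ((t:ℝ) + b)) * ((b-1)/((t:ℝ)+b-1))
          = (b-1)/((t:ℝ)+b) := by
        field_simp
      calc f (x (t+1)) - fstar
          ≤ (((t:ℝ) + b - 1) / ((t:ℝ) + b)) ^ 3 * (f (x t) - fstar) := key t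
        _ ≤ (((t:ℝ) + b - 1) / ((t:ℝ) + b)) ^ 3 *
            (((b-1)/((t:ℝ)+b-1))^3 * (f (x 0) - fstar)) :=
            mul_le_mul_of_nonneg_left ih hrat_nn
        _ = ((b-1)/(((t:ℕ):ℝ)+1+b-1))^3 * (f (x 0) - fstar) := by
            rw [← mul_assoc, ← mul_pow, hmul]
            ring_nf
        _ = ((b-1)/(((t+1:ℕ):ℝ)+b-1))^3 * (f (x 0) - fstar) := by push_cast; ring_nf
  intro T hT
  have hT0 : (0:ℝ) < (T:ℝ) := by exact_mod_cast hT
  have hbnd : ((b-1)/((T:ℝ)+b-1))^3 ≤ (b-1)^3 / (T:ℝ)^3 := by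
    rw [div_pow]
    gcongr
    linarith
  calc f (x T) - fstar ≤ ((b-1)/((T:ℝ)+b-1))^3 * (f (x 0) - fstar) := main T
    _ ≤ ((b-1)^3 / (T:ℝ)^3) * (f (x 0) - fstar) :=
        mul_le_mul_of_nonneg_right hbnd hE0
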